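/- Let X be a Polish space and let E be an equivalence relation on X which is closed as a subset of X × X. Then E is smooth: there exists a Borel (measurable) map f : X → (ℕ → Bool) such that for all x, y ∈ X, x E y if and only if f(x) = f(y). -/
import Mathlib

open Set MeasureTheory TopologicalSpace

namespace Stmt0Aux

variable {X : Type*} [TopologicalSpace X] [PolishSpace X]
    [MeasurableSpace X] [BorelSpace X]

/-- The `E`-saturation of a set. -/
def sat (E : X → X → Prop) (S : Set X) : Set X := {x | ∃ y ∈ S, E x y}

theorem subset_sat {E : X → X → Prop} (hE : Equivalence E) (S : Set X) : S ⊆ sat E S :=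
  fun x hx => ⟨x, hx, hE.refl x⟩

theorem sat_sat {E : X → X → Prop} (hE : Equivalence E) (S : Set X) :
    sat E (sat E S) ⊆ sat E S := by
  rintro x ⟨y, ⟨z, hz, hyz⟩, hxy⟩
  exact ⟨z, hz, hE.trans hxy hyz⟩

theorem mem_sat_of_rel {E : X → X → Prop} (hE : Equivalence E) {S : Set X} {x y : X}
    (hxy : E x y) (hx : x ∈ sat E S) : y ∈ sat E S := by
  rcases hx with ⟨z, hz, hxz⟩
  exact ⟨z, hz, hE.trans (hE.symm hxy) hxz⟩

theorem sat_analytic {E : X → X → Prop}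
    (hclosed : IsClosed {p : X × X | E p.1 p.2}) {S : Set X}
    (hS : AnalyticSet S) : AnalyticSet (sat E S) := by
  have h1 : AnalyticSet {p : X × X | E p.1 p.2} := hclosed.analyticSet
  have h2 : AnalyticSet (Prod.snd ⁻¹' S : Set (X × X)) := by
    rcases analyticSet_iff_exists_polishSpace_range.1 hS with ⟨γ, tγ, pγ, g, gc, grange⟩
    have : (Prod.snd ⁻¹' S : Set (X × X)) = range (fun p : X × γ => (p.1, g p.2)) := by
      ext ⟨x, y⟩
      constructor
      · intro hy
        rw [← grange] at hy
        rcases hy with ⟨c, hc⟩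
        exact ⟨(x, c), by simp [hc]⟩
      · rintro ⟨⟨a, c⟩, h⟩
        have h1 : a = x := congrArg Prod.fst h
        have h2 : g c = y := congrArg Prod.snd h
        simp only [mem_preimage, ← h2, ← grange]
        exact mem_range_self c
    rw [this]
    exact analyticSet_range_of_polishSpace
      (continuous_fst.prodMk (gc.comp continuous_snd))
  have hinter : AnalyticSet ({p : X × X | E p.1 p.2} ∩ Prod.snd ⁻¹' S) := by
    rw [Set.inter_eq_iInter]
    exact AnalyticSet.iInter (fun b => by cases b <;> simpa)
  have himg : sat E S = Prod.fst '' ({p : X × X | E p.1 p.2} ∩ Prod.snd ⁻¹' S) := by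
    ext x
    constructor
    · rintro ⟨y, hy, hxy⟩
      exact ⟨(x, y), ⟨hxy, hy⟩, rfl⟩
    · rintro ⟨⟨a, b⟩, ⟨hab, hb⟩, rfl⟩
      exact ⟨b, hb, hab⟩
  rw [himg]
  exact hinter.image_of_continuous continuous_fst

/-- Invariant separation: two disjoint invariant analytic sets can be separated by an
invariant Borel set. -/
theorem invariant_separation {E : X → X → Prop} (hE : Equivalence E)
    (hclosed : IsClosed {p : X × X | E p.1 p.2}) {A B : Set X}
    (hA : AnalyticSet A) (hB : AnalyticSet B)
    (hAs : sat E A ⊆ A) (hBs : sat E B ⊆ B) (hd : Disjoint A B) :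
    ∃ C : Set X, MeasurableSet C ∧ A ⊆ C ∧ Disjoint B C ∧
      ∀ ⦃x y : X⦄, E x y → x ∈ C → y ∈ C := by
  classical
  -- "Good" pairs of invariant disjoint analytic supersets of A and B.
  set Good : Set X × Set X → Prop := fun p =>
    AnalyticSet p.1 ∧ AnalyticSet p.2 ∧ sat E p.1 ⊆ p.1 ∧ sat E p.2 ⊆ p.2 ∧
      Disjoint p.1 p.2 ∧ A ⊆ p.1 ∧ B ⊆ p.2 with hGoodDef
  -- inheritance of "invariant" across saturation-of-complement
  have satinv : ∀ S : Set X, sat E (sat E S) ⊆ sat E S := sat_sat hE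
  -- one step of the construction
  have step : ∀ p : Set X × Set X, Good p →
      ∃ (D : Set X) (q : Set X × Set X), Good q ∧ MeasurableSet D ∧
        Disjoint p.1 D ∧ p.2 ⊆ D ∧ sat E Dᶜ ⊆ q.1 := by
    rintro ⟨A', B'⟩ ⟨hA', hB', hA's, hB's, hdisj, hAA', hBB'⟩
    -- first separator
    obtain ⟨C', hA'C, hdisjB'C, hC'meas⟩ := hA'.measurablySeparable hB' hdisj
    set B'' : Set X := sat E C'ᶜ with hB''def
    have hB''a : AnalyticSet B'' := sat_analytic hclosed hC'meas.compl.analyticSet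
    have hB''s : sat E B'' ⊆ B'' := satinv _
    have hB'B'' : B' ⊆ B'' := fun x hx =>
      subset_sat hE _ (disjoint_left.1 hdisjB'C hx)
    have hdisjA'B'' : Disjoint A' B'' := by
      rw [disjoint_left]
      rintro x hxA ⟨z, hz, hxz⟩
      have : z ∈ sat E A' := ⟨x, hxA, hE.symm hxz⟩
      exact hz (hA'C (hA's this))
    -- second separator
    obtain ⟨D, hB''D, hdisjA'D, hDmeas⟩ := hB''a.measurablySeparable hA' hdisjA'B''.symm
    set A'' : Set X := sat E Dᶜ with hA''def
    have hA''a : AnalyticSet A'' := sat_analytic hclosed hDmeas.compl.analyticSet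
    have hA''s : sat E A'' ⊆ A'' := satinv _
    have hA'A'' : A' ⊆ A'' := fun x hx =>
      subset_sat hE _ (disjoint_left.1 hdisjA'D hx)
    have hdisjA''B'' : Disjoint A'' B'' := by
      rw [disjoint_left]
      rintro x ⟨z, hz, hxz⟩ hxB
      have : z ∈ sat E B'' := ⟨x, hxB, hE.symm hxz⟩
      exact hz (hB''D (hB''s this))
    exact ⟨D, (A'', B''), ⟨hA''a, hB''a, hA''s, hB''s, hdisjA''B'',
      hAA'.trans hA'A'', hBB'.trans hB'B''⟩, hDmeas, hdisjA'D,
      hB'B''.trans hB''D, subset_rfl⟩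
  -- choose the data of each step
  choose! D q hGoodq hDmeas hdisjD hsubD hsatD using step
  -- iterate
  set seq : ℕ → Set X × Set X := fun n => (fun p => q p)^[n] (A, B) with hseqdef
  have hseq0 : seq 0 = (A, B) := rfl
  have hseqsucc : ∀ n, seq (n + 1) = q (seq n) := by
    intro n
    simp only [hseqdef, Function.iterate_succ_apply']
  have hGoodseq : ∀ n, Good (seq n) := by
    intro n
    induction n with
    | zero => exact ⟨hA, hB, hAs, hBs, hd, subset_rfl, subset_rfl⟩
    | succ n ih => rw [hseqsucc]; exact hGoodq _ ih
  refine ⟨⋃ n, (D (seq n))ᶜ, ?_, ?_, ?_, ?_⟩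
  · exact MeasurableSet.iUnion fun n => (hDmeas _ (hGoodseq n)).compl
  · -- A ⊆ C
    have h0 : A ⊆ (D (seq 0))ᶜ := by
      have := hdisjD _ (hGoodseq 0)
      rw [hseq0] at this
      exact fun x hx => disjoint_left.1 this hx
    exact h0.trans (subset_iUnion (fun n => (D (seq n))ᶜ) 0)
  · -- Disjoint B C
    rw [disjoint_iUnion_right]
    intro n
    rw [disjoint_left]
    intro x hx hxc
    exact hxc ((hsubD _ (hGoodseq n)) ((hGoodseq n).2.2.2.2.2.2 hx))
  · -- invariance
    rintro x y hxy hx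
    rcases mem_iUnion.1 hx with ⟨n, hxn⟩
    have hy : y ∈ sat E (D (seq n))ᶜ := ⟨x, hxn, hE.symm hxy⟩
    have hy1 : y ∈ (seq (n + 1)).1 := by
      have := hsatD _ (hGoodseq n)
      rw [← hseqsucc] at this
      exact this hy
    have : y ∈ (D (seq (n + 1)))ᶜ :=
      fun hc => disjoint_left.1 (hdisjD _ (hGoodseq (n + 1))) hy1 hc
    exact mem_iUnion.2 ⟨n + 1, this⟩

end Stmt0Aux

/-- A closed equivalence relation on a Polish space is smooth. -/
theorem stmt_0 {X : Type*} [TopologicalSpace X] [PolishSpace X]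
    [MeasurableSpace X] [BorelSpace X]
    (E : X → X → Prop) (hE : Equivalence E)
    (hclosed : IsClosed {p : X × X | E p.1 p.2}) :
    ∃ f : X → (ℕ → Bool), Measurable f ∧ ∀ x y : X, E x y ↔ f x = f y := by
  classical
  open Stmt0Aux in
  -- enumerate a countable basis (with ∅ added so that it is nonempty)
  obtain ⟨b, hb⟩ : ∃ b : ℕ → Set X, insert ∅ (countableBasis X) = range b :=
    ((countable_countableBasis X).insert ∅).exists_eq_range (insert_nonempty _ _)
  have hbopen : ∀ n, IsOpen (b n) := by
    intro n
    have : b n ∈ insert ∅ (countableBasis X) := hb ▸ mem_range_self n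
    rcases this with h | h
    · rw [h]; exact isOpen_empty
    · exact isOpen_of_mem_countableBasis h
  -- good pairs: basic rectangles disjoint from E
  set P : ℕ → ℕ → Prop := fun n m => ∀ u ∈ b n, ∀ v ∈ b m, ¬E u v with hPdef
  have key : ∀ n m, P n m → ∃ C : Set X, MeasurableSet C ∧ sat E (b n) ⊆ C ∧
      Disjoint (sat E (b m)) C ∧ ∀ ⦃x y : X⦄, E x y → x ∈ C → y ∈ C := by
    intro n m hP
    have hdisj : Disjoint (sat E (b n)) (sat E (b m)) := by
      rw [disjoint_left]
      rintro z ⟨u, hu, hzu⟩ ⟨v, hv, hzv⟩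
      exact hP u hu v hv (hE.trans (hE.symm hzu) hzv)
    exact invariant_separation hE hclosed
      (sat_analytic hclosed (hbopen n).measurableSet.analyticSet)
      (sat_analytic hclosed (hbopen m).measurableSet.analyticSet)
      (sat_sat hE _) (sat_sat hE _) hdisj
  choose! C hCmeas hCsub hCdisj hCinv using key
  -- guard against bad pairs
  set C0 : ℕ → ℕ → Set X := fun n m => if P n m then C n m else ∅ with hC0def
  have hC0meas : ∀ n m, MeasurableSet (C0 n m) := by
    intro n m
    by_cases hP : P n m
    · rw [hC0def]; simp only [if_pos hP]; exact hCmeas _ _ hP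
    · rw [hC0def]; simp only [if_neg hP]; exact MeasurableSet.empty
  have hC0inv : ∀ n m, ∀ ⦃x y : X⦄, E x y → x ∈ C0 n m → y ∈ C0 n m := by
    intro n m x y hxy hx
    by_cases hP : P n m
    · rw [hC0def] at hx ⊢; simp only [if_pos hP] at hx ⊢; exact hCinv _ _ hP hxy hx
    · rw [hC0def] at hx; simp only [if_neg hP] at hx; exact absurd hx (notMem_empty x)
  have hC0eq : ∀ n m, P n m → C0 n m = C n m := by
    intro n m hP; rw [hC0def]; simp only [if_pos hP]
  -- define the reduction
  refine ⟨fun x k => if x ∈ C0 (Nat.unpair k).1 (Nat.unpair k).2 then true else false, ?_, ?_⟩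
  · rw [measurable_pi_iff]
    intro k
    exact Measurable.ite (hC0meas _ _) measurable_const measurable_const
  · intro x y
    constructor
    · intro hxy
      funext k
      by_cases hx : x ∈ C0 (Nat.unpair k).1 (Nat.unpair k).2
      · simp only [if_pos hx, if_pos (hC0inv _ _ hxy hx)]
      · have hy : y ∉ C0 (Nat.unpair k).1 (Nat.unpair k).2 :=
          fun hy => hx (hC0inv _ _ (hE.symm hxy) hy)
        simp only [if_neg hx, if_neg hy]
    · intro hf
      by_contra hxy
      have hopen : IsOpen {p : X × X | E p.1 p.2}ᶜ := hclosed.isOpen_compl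
      obtain ⟨t, ht, hxyt, hts⟩ :=
        ((isBasis_countableBasis X).prod (isBasis_countableBasis X)).exists_subset_of_mem_open
          (show (x, y) ∈ {p : X × X | E p.1 p.2}ᶜ from hxy) hopen
      rcases ht with ⟨u, hu, v, hv, rfl⟩
      obtain ⟨n, hn⟩ : ∃ n, b n = u := by
        have : u ∈ range b := hb ▸ mem_insert_of_mem _ hu
        rcases this with ⟨n, hn⟩; exact ⟨n, hn⟩
      obtain ⟨m, hm⟩ : ∃ m, b m = v := by
        have : v ∈ range b := hb ▸ mem_insert_of_mem _ hv
        rcases this with ⟨m, hm⟩; exact ⟨m, hm⟩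
      have hP : P n m := by
        intro p hp q hq hpq
        exact hts (mk_mem_prod (hn ▸ hp) (hm ▸ hq)) hpq
      have hx : x ∈ C0 n m := by
        rw [hC0eq n m hP]
        exact hCsub _ _ hP (subset_sat hE _ (hn ▸ hxyt.1))
      have hy : y ∉ C0 n m := by
        rw [hC0eq n m hP]
        exact disjoint_left.1 (hCdisj _ _ hP) (subset_sat hE _ (hm ▸ hxyt.2))
      have := congrFun hf (Nat.pair n m)
      simp only [Nat.unpair_pair, if_pos hx, if_neg hy] at this
      exact Bool.noConfusion this
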